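/- Marginal coverage of hierarchical conformal prediction (HCP), lower bound: Suppose the groups Z̃_1,…,Z̃_{K+1} satisfy hierarchical exchangeability, the HCP prediction set Ĉ at level α ∈ (0,1) is constructed from the training groups Z̃_1,…,Z̃_{K₀} and calibration groups Z̃_{K₀+1},…,Z̃_K, and the test point is (X_test, Y_test) = Z_{K+1,1}, the first observation of group K+1. Then P(Y_test ∈ Ĉ(X_test)) ≥ 1 − α. -/

import Mathlib

open MeasureTheory ProbabilityTheory
open scoped ENNReal

noncomputable section

/-- Extend a permutation of `Fin m` to `ℕ` by the identity outside `{0, …, m-1}`. -/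
def permExt {m : ℕ} (σ : Equiv.Perm (Fin m)) : ℕ → ℕ :=
  fun i => if h : i < m then (σ ⟨i, h⟩ : ℕ) else i

/-- The representation of the groups `0, …, L-1` of a hierarchical data set:
group `k` is recorded as the pair of its size `N k ω` and its sequence of observations. -/
def hierData {Ω 𝒵 : Type*} (L : ℕ) (N : ℕ → Ω → ℕ) (Z : ℕ → ℕ → Ω → 𝒵) :
    Ω → Fin L → ℕ × (ℕ → 𝒵) :=
  fun ω k => (N k.1 ω, fun i => Z k.1 i ω)

/-- Hierarchical exchangeability (Definition 1.1) of the groups `0, …, L-1`: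
(i) the groups are exchangeable with each other, and (ii) for each `k` and each `m`
with `P(N_k = m) > 0`, conditionally on `N_k = m` the first `m` observations within
group `k` are exchangeable. -/
def HierExch {Ω 𝒵 : Type*} [MeasurableSpace Ω] [MeasurableSpace 𝒵] (L : ℕ)
    (P : Measure Ω) (N : ℕ → Ω → ℕ) (Z : ℕ → ℕ → Ω → 𝒵) : Prop :=
  (∀ σ : Equiv.Perm (Fin L),
      Measure.map (fun ω => fun k : Fin L => hierData L N Z ω (σ k)) P
        = Measure.map (hierData L N Z) P) ∧
  (∀ k, k < L → ∀ m : ℕ, 0 < P {ω | N k ω = m} → ∀ σ : Equiv.Perm (Fin m),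
      Measure.map
          (hierData L N fun k' i => if k' = k then Z k' (permExt σ i) else Z k' i)
          (ProbabilityTheory.cond P {ω | N k ω = m})
        = Measure.map (hierData L N Z) (ProbabilityTheory.cond P {ω | N k ω = m}))

/-- The `(1-β)`-quantile `Q_{1-β}(μ) = inf {t : μ((-∞, t]) ≥ 1-β}` of a distribution `μ`
on the extended real line. -/
def erealQuantile (β : ℝ) (μ : Measure EReal) : EReal :=
  sInf {t : EReal | ENNReal.ofReal β ≤ μ (Set.Iic t)}

/-- The HCP threshold: the `(1-α)`-quantile of the weighted empirical distribution
`Σ_{k=K₀}^{K-1} Σ_{i<n k} (1/((K₁+1)·(n k))) δ_{sc k i} + (1/(K₁+1)) δ_{+∞}`,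
where `K₁ = K - K₀`. -/
def hcpThreshold (α : ℝ) (K₀ K : ℕ) (n : ℕ → ℕ) (sc : ℕ → ℕ → ℝ) : EReal :=
  erealQuantile (1 - α)
    ((∑ k ∈ Finset.Ico K₀ K, ∑ i ∈ Finset.range (n k),
        (((K - K₀ + 1 : ℕ) : ℝ≥0∞) * (n k : ℝ≥0∞))⁻¹ • Measure.dirac ((sc k i : EReal)))
      + (((K - K₀ + 1 : ℕ) : ℝ≥0∞))⁻¹ • Measure.dirac (⊤ : EReal))

namespace HCPproof

open Set Filter Topology

/-- Quantile-type bound: for a subprobability measure `μ` on `EReal`, the mass of the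
set of points whose open lower tail already has measure at least `β` is at most `1 - β`. -/
lemma claim3 (β : ℝ≥0∞) (μ : Measure EReal) (hμ : μ Set.univ ≤ 1) :
    μ {x | β ≤ μ (Set.Iio x)} ≤ 1 - β := by
  set S : Set EReal := {x | β ≤ μ (Set.Iio x)} with hSdef
  have hup : ∀ {x y : EReal}, x ∈ S → x ≤ y → y ∈ S := by
    intro x y hx hxy
    exact le_trans hx (measure_mono (Iio_subset_Iio hxy))
  rcases eq_empty_or_nonempty S with hS | hS
  · simp [hS]
  set t₀ : EReal := sInf S with ht₀
  by_cases ht : t₀ ∈ S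
  · have h1 : S ⊆ Set.Ici t₀ := fun y hy => sInf_le hy
    have h2 : β + μ (Set.Ici t₀) ≤ 1 := by
      calc β + μ (Set.Ici t₀) ≤ μ (Set.Iio t₀) + μ (Set.Ici t₀) :=
            add_le_add ht le_rfl
        _ = μ Set.univ := by
            rw [← measure_add_measure_compl (measurableSet_Iio (a := t₀)), compl_Iio]
        _ ≤ 1 := hμ
    exact le_trans (measure_mono h1)
      (ENNReal.le_sub_of_add_le_left (ne_top_of_le_ne_top ENNReal.one_ne_top
        (le_trans le_self_add h2)) h2)
  · have h1 : S ⊆ Set.Ioi t₀ := by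
      intro y hy
      rcases lt_or_eq_of_le (sInf_le hy : t₀ ≤ y) with h | h
      · exact h
      · rw [← h] at hy; exact absurd hy ht
    have htop : t₀ < ⊤ := by
      rcases hS with ⟨y, hy⟩
      rcases lt_or_eq_of_le (le_top : t₀ ≤ ⊤) with h | h
      · exact h
      · exfalso
        have : t₀ ≤ y := sInf_le hy
        have : y = t₀ := le_antisymm (h ▸ le_top) this
        exact ht (this ▸ hy)
    obtain ⟨u, hanti, hmem, htend⟩ := exists_seq_strictAnti_tendsto' htop
    have humem : ∀ n, u n ∈ S := by
      intro n
      by_contra hn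
      have : u n ≤ t₀ := by
        apply le_sInf
        intro b hb
        by_contra hub
        exact hn (hup hb (le_of_not_ge hub))
      exact absurd (lt_of_lt_of_le (hmem n).1 this) (lt_irrefl _)
    have hIic : Set.Iic t₀ = ⋂ n, Set.Iio (u n) := by
      ext y
      simp only [mem_Iic, mem_iInter, mem_Iio]
      constructor
      · intro hy n; exact lt_of_le_of_lt hy (hmem n).1
      · intro hy
        exact ge_of_tendsto' htend fun n => le_of_lt (hy n)
    have hβIic : β ≤ μ (Set.Iic t₀) := by
      rw [hIic]
      have htends : Tendsto (fun n => μ (Set.Iio (u n))) atTop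
          (𝓝 (μ (⋂ n, Set.Iio (u n)))) := by
        have : IsFiniteMeasure μ :=
          ⟨lt_of_le_of_lt (le_trans (measure_mono (subset_univ _)) hμ) ENNReal.one_lt_top⟩
        exact tendsto_measure_iInter_atTop (fun n => measurableSet_Iio.nullMeasurableSet)
          (fun a b hab => Iio_subset_Iio (hanti.antitone hab)) ⟨0, measure_ne_top μ _⟩
      exact ge_of_tendsto' htends fun n => humem n
    have h2 : β + μ (Set.Ioi t₀) ≤ 1 := by
      calc β + μ (Set.Ioi t₀) ≤ μ (Set.Iic t₀) + μ (Set.Ioi t₀) := add_le_add hβIic le_rfl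
        _ = μ Set.univ := by
            rw [← measure_add_measure_compl (measurableSet_Iic (a := t₀)), compl_Iic]
        _ ≤ 1 := hμ
    exact le_trans (measure_mono h1)
      (ENNReal.le_sub_of_add_le_left (ne_top_of_le_ne_top ENNReal.one_ne_top
        (le_trans le_self_add h2)) h2)

lemma sum_permExt {M : Type*} [AddCommMonoid M] {m : ℕ} (σ : Equiv.Perm (Fin m)) (F : ℕ → M) :
    ∑ i ∈ Finset.range m, F (permExt σ i) = ∑ i ∈ Finset.range m, F i := by
  rw [← Fin.sum_univ_eq_sum_range (fun i => F (permExt σ i)), ← Fin.sum_univ_eq_sum_range F]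
  rw [← Equiv.sum_comp σ (fun i : Fin m => F i.1)]
  apply Finset.sum_congr rfl
  intro i _
  simp [permExt, i.2]

lemma swap_fin_val {n a b : ℕ} (ha : a < n) (hb : b < n) (k : Fin n) :
    ((Equiv.swap (⟨a, ha⟩ : Fin n) ⟨b, hb⟩ k : Fin n) : ℕ) = Equiv.swap a b (k : ℕ) := by
  rcases k with ⟨k, hk⟩
  simp only [Equiv.swap_apply_def, Fin.ext_iff]
  split_ifs <;> simp_all

variable {𝒳 𝒴 : Type*}

/-- Group `k` of a data configuration (groups beyond `K` clipped to group `K`). -/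
def gp (K : ℕ) (d : Fin (K + 1) → ℕ × (ℕ → 𝒳 × 𝒴)) (k : ℕ) : ℕ × (ℕ → 𝒳 × 𝒴) :=
  d ⟨min k K, Nat.lt_succ_of_le (min_le_right k K)⟩

/-- The training groups of a configuration. -/
def tr (K K₀ : ℕ) (d : Fin (K + 1) → ℕ × (ℕ → 𝒳 × 𝒴)) : Fin K₀ → ℕ × (ℕ → 𝒳 × 𝒴) :=
  fun j => gp K d j.1

/-- Score of observation `i` of group `k`. -/
def sc (K K₀ : ℕ) (A : (Fin K₀ → ℕ × (ℕ → 𝒳 × 𝒴)) → 𝒳 × 𝒴 → ℝ)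
    (d : Fin (K + 1) → ℕ × (ℕ → 𝒳 × 𝒴)) (k i : ℕ) : ℝ :=
  A (tr K K₀ d) ((gp K d k).2 i)

/-- Weighted count of calibration/test scores strictly below `x`. -/
def pf (K K₀ : ℕ) (A : (Fin K₀ → ℕ × (ℕ → 𝒳 × 𝒴)) → 𝒳 × 𝒴 → ℝ)
    (d : Fin (K + 1) → ℕ × (ℕ → 𝒳 × 𝒴)) (x : ℝ) : ℝ≥0∞ :=
  ∑ k ∈ Finset.Ico K₀ (K + 1),
    (((K - K₀ + 1 : ℕ) : ℝ≥0∞)⁻¹ * (((gp K d k).1 : ℕ) : ℝ≥0∞)⁻¹) *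
      ∑ i ∈ Finset.range (gp K d k).1, (if sc K K₀ A d k i < x then (1 : ℝ≥0∞) else 0)

/-- Within-group fraction of "bad" observations of group `k`. -/
def ff (K K₀ : ℕ) (A : (Fin K₀ → ℕ × (ℕ → 𝒳 × 𝒴)) → 𝒳 × 𝒴 → ℝ) (β : ℝ≥0∞)
    (k : ℕ) (d : Fin (K + 1) → ℕ × (ℕ → 𝒳 × 𝒴)) : ℝ≥0∞ :=
  (((gp K d k).1 : ℕ) : ℝ≥0∞)⁻¹ *
    ∑ j ∈ Finset.range (gp K d k).1,
      (if β ≤ pf K K₀ A d (sc K K₀ A d k j) then (1 : ℝ≥0∞) else 0)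

section Meas
variable [MeasurableSpace 𝒳] [MeasurableSpace 𝒴]
variable {K K₀ : ℕ} {A : (Fin K₀ → ℕ × (ℕ → 𝒳 × 𝒴)) → 𝒳 × 𝒴 → ℝ}
  (hA : Measurable fun p : (Fin K₀ → ℕ × (ℕ → 𝒳 × 𝒴)) × (𝒳 × 𝒴) => A p.1 p.2)

lemma meas_gp (k : ℕ) : Measurable (fun d : Fin (K + 1) → ℕ × (ℕ → 𝒳 × 𝒴) => gp K d k) :=
  measurable_pi_apply _

lemma meas_nn (k : ℕ) : Measurable (fun d : Fin (K + 1) → ℕ × (ℕ → 𝒳 × 𝒴) => (gp K d k).1) :=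
  measurable_fst.comp (meas_gp k)

lemma meas_tr : Measurable (fun d : Fin (K + 1) → ℕ × (ℕ → 𝒳 × 𝒴) => tr K K₀ d) :=
  measurable_pi_lambda _ fun _ => measurable_pi_apply _

lemma measurable_sum_range {δ : Type*} [MeasurableSpace δ] {nf : δ → ℕ} (hn : Measurable nf)
    {g : ℕ → δ → ℝ≥0∞} (hg : ∀ i, Measurable (g i)) :
    Measurable fun d => ∑ i ∈ Finset.range (nf d), g i d := by
  have : (fun d => ∑ i ∈ Finset.range (nf d), g i d)
      = fun d => ∑' m : ℕ, Set.indicator {d | nf d = m}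
          (fun d => ∑ i ∈ Finset.range m, g i d) d := by
    funext d
    rw [tsum_eq_single (nf d)]
    · simp [Set.indicator_of_mem, Set.mem_setOf_eq]
    · intro m hm
      rw [Set.indicator_of_notMem]
      simp only [Set.mem_setOf_eq]
      exact fun h => hm (h ▸ rfl)
  rw [this]
  exact Measurable.ennreal_tsum fun m =>
    ((Finset.measurable_sum _ fun i _ => hg i).indicator (hn (MeasurableSet.singleton m)))

include hA

lemma meas_sc (k i : ℕ) :
    Measurable (fun d : Fin (K + 1) → ℕ × (ℕ → 𝒳 × 𝒴) => sc K K₀ A d k i) :=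
  hA.comp (meas_tr.prodMk
    ((measurable_pi_apply i).comp (measurable_snd.comp (meas_gp k))))

lemma meas_pf_sc (k j : ℕ) :
    Measurable (fun d : Fin (K + 1) → ℕ × (ℕ → 𝒳 × 𝒴) => pf K K₀ A d (sc K K₀ A d k j)) := by
  apply Finset.measurable_sum
  intro k' _
  apply Measurable.mul
  · exact (measurable_from_top (f := fun n : ℕ =>
      ((K - K₀ + 1 : ℕ) : ℝ≥0∞)⁻¹ * ((n : ℕ) : ℝ≥0∞)⁻¹)).comp (meas_nn k')
  · exact measurable_sum_range (meas_nn k') fun i =>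
      Measurable.ite (measurableSet_lt (meas_sc hA k' i) (meas_sc hA k j))
        measurable_const measurable_const

lemma meas_ff (β : ℝ≥0∞) (k : ℕ) : Measurable (ff K K₀ A β k) := by
  apply Measurable.mul
  · exact (measurable_from_top (f := fun n : ℕ => ((n : ℕ) : ℝ≥0∞)⁻¹)).comp (meas_nn k)
  · exact measurable_sum_range (meas_nn k) fun j =>
      Measurable.ite (measurableSet_le measurable_const (meas_pf_sc hA k j))
        measurable_const measurable_const

end Meas

/-- Effect of swapping calibration group `k` with the test group `K`. -/
lemma ff_swap (K K₀ : ℕ) (A : (Fin K₀ → ℕ × (ℕ → 𝒳 × 𝒴)) → 𝒳 × 𝒴 → ℝ) (β : ℝ≥0∞)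
    (k : ℕ) (hk0 : K₀ ≤ k) (hkK : k ≤ K) (d : Fin (K + 1) → ℕ × (ℕ → 𝒳 × 𝒴)) :
    ff K K₀ A β K
      (fun j => d (Equiv.swap (⟨k, Nat.lt_succ_of_le hkK⟩ : Fin (K + 1))
        ⟨K, Nat.lt_succ_self K⟩ j))
      = ff K K₀ A β k d := by
  set σf : Equiv.Perm (Fin (K + 1)) :=
    Equiv.swap (⟨k, Nat.lt_succ_of_le hkK⟩ : Fin (K + 1)) ⟨K, Nat.lt_succ_self K⟩ with hσf
  set e : Equiv.Perm ℕ := Equiv.swap k K with he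
  set dσ : Fin (K + 1) → ℕ × (ℕ → 𝒳 × 𝒴) := fun j => d (σf j) with hdσ
  have heK : ∀ k' : ℕ, k' ≤ K → e k' ≤ K := by
    intro k' hk'
    rcases eq_or_ne k' k with h | h
    · subst h; rw [he, Equiv.swap_apply_left]
    rcases eq_or_ne k' K with h2 | h2
    · subst h2; rw [he, Equiv.swap_apply_right]; exact hkK
    · rw [he, Equiv.swap_apply_of_ne_of_ne h h2]; exact hk'
  have hgp : ∀ k' : ℕ, k' ≤ K → gp K dσ k' = gp K d (e k') := by
    intro k' hk'
    show d (σf ⟨min k' K, _⟩) = d ⟨min (e k') K, _⟩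
    congr 1
    apply Fin.ext
    rw [swap_fin_val]
    simp only [min_eq_left hk', min_eq_left (heK k' hk')]
    rfl
  have htr : tr K K₀ dσ = tr K K₀ d := by
    funext j
    have hj : (j : ℕ) < K := lt_of_lt_of_le j.2 (le_trans hk0 hkK)
    have hjk : (j : ℕ) ≠ k := ne_of_lt (lt_of_lt_of_le j.2 hk0)
    have hjK : (j : ℕ) ≠ K := ne_of_lt hj
    show gp K dσ j.1 = gp K d j.1
    rw [hgp j.1 hj.le, he, Equiv.swap_apply_of_ne_of_ne hjk hjK]
  have hsc : ∀ k' : ℕ, k' ≤ K → ∀ i, sc K K₀ A dσ k' i = sc K K₀ A d (e k') i := by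
    intro k' hk' i
    simp only [sc]
    rw [htr, hgp k' hk']
  have hpf : ∀ x, pf K K₀ A dσ x = pf K K₀ A d x := by
    intro x
    unfold pf
    refine Finset.sum_equiv e ?_ ?_
    · intro k'
      simp only [Finset.mem_Ico]
      constructor
      · rintro ⟨h1, h2⟩
        have hk'K : k' ≤ K := Nat.lt_succ_iff.1 h2
        refine ⟨?_, Nat.lt_succ_of_le (heK k' hk'K)⟩
        rcases eq_or_ne k' k with h | h
        · subst h; rw [he, Equiv.swap_apply_left]; exact le_trans hk0 hkK
        rcases eq_or_ne k' K with h2' | h2'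
        · subst h2'; rw [he, Equiv.swap_apply_right]; exact hk0
        · rw [he, Equiv.swap_apply_of_ne_of_ne h h2']; exact h1
      · rintro ⟨h1, h2⟩
        by_contra hcon
        push_neg at hcon
        rcases Nat.lt_or_ge k' K₀ with hlt | hge
        · have hk'k : k' ≠ k := ne_of_lt (lt_of_lt_of_le hlt hk0)
          have hk'K : k' ≠ K := ne_of_lt (lt_of_lt_of_le hlt (le_trans hk0 hkK))
          rw [he, Equiv.swap_apply_of_ne_of_ne hk'k hk'K] at h1
          exact absurd h1 (not_le.2 hlt)
        · have hbig : K + 1 ≤ k' := hcon hge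
          have hk'k : k' ≠ k := by omega
          have hk'K : k' ≠ K := by omega
          rw [he, Equiv.swap_apply_of_ne_of_ne hk'k hk'K] at h2
          omega
    · intro k' hk'
      have hk'K : k' ≤ K := Nat.lt_succ_iff.1 (Finset.mem_Ico.1 hk').2
      rw [hgp k' hk'K]
      congr 1
      apply Finset.sum_congr rfl
      intro i _
      rw [hsc k' hk'K i]
  have hgpK : gp K dσ K = gp K d k := by
    rw [hgp K le_rfl, he, Equiv.swap_apply_right]
  unfold ff
  rw [hgpK]
  congr 1
  apply Finset.sum_congr rfl
  intro j _
  rw [hsc K le_rfl j, he, Equiv.swap_apply_right, hpf]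

/-- Effect of permuting the observations within the test group `K`. -/
lemma pf_within {Ω : Type*} (K K₀ : ℕ) (hK₀ : K₀ ≤ K)
    (A : (Fin K₀ → ℕ × (ℕ → 𝒳 × 𝒴)) → 𝒳 × 𝒴 → ℝ)
    (N : ℕ → Ω → ℕ) (Z : ℕ → ℕ → Ω → 𝒳 × 𝒴) (m : ℕ) (σ : Equiv.Perm (Fin m))
    (ω : Ω) (hω : N K ω = m) :
    (∀ x, pf K K₀ A (hierData (K + 1) N
        (fun k' i => if k' = K then Z k' (permExt σ i) else Z k' i) ω) x
      = pf K K₀ A (hierData (K + 1) N Z ω) x)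
    ∧ ∀ i, sc K K₀ A (hierData (K + 1) N
        (fun k' i => if k' = K then Z k' (permExt σ i) else Z k' i) ω) K i
      = sc K K₀ A (hierData (K + 1) N Z ω) K (permExt σ i) := by
  set Z' : ℕ → ℕ → Ω → 𝒳 × 𝒴 :=
    fun k' i => if k' = K then Z k' (permExt σ i) else Z k' i with hZ'
  have hgp : ∀ k' : ℕ, k' < K →
      gp K (hierData (K + 1) N Z' ω) k' = gp K (hierData (K + 1) N Z ω) k' := by
    intro k' hk'
    have hmin : min k' K = k' := min_eq_left hk'.le
    simp only [gp, hierData, hmin]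
    refine Prod.ext rfl ?_
    funext i
    show Z' k' i ω = Z k' i ω
    rw [hZ']
    simp [ne_of_lt hk']
  have htr : tr K K₀ (hierData (K + 1) N Z' ω) = tr K K₀ (hierData (K + 1) N Z ω) := by
    funext j
    exact hgp j.1 (lt_of_lt_of_le j.2 hK₀)
  have hn : ∀ k' : ℕ, (gp K (hierData (K + 1) N Z' ω) k').1
      = (gp K (hierData (K + 1) N Z ω) k').1 := fun k' => rfl
  have hgpK2 : ∀ i, (gp K (hierData (K + 1) N Z' ω) K).2 i = Z K (permExt σ i) ω := by
    intro i
    simp only [gp, hierData, min_self]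
    show Z' K i ω = Z K (permExt σ i) ω
    rw [hZ']
    simp
  have hsc : ∀ i, sc K K₀ A (hierData (K + 1) N Z' ω) K i
      = sc K K₀ A (hierData (K + 1) N Z ω) K (permExt σ i) := by
    intro i
    simp only [sc]
    rw [htr, hgpK2 i]
    congr 1
    simp [gp, hierData, min_self]
  refine ⟨?_, hsc⟩
  intro x
  unfold pf
  rw [Finset.sum_Ico_succ_top hK₀, Finset.sum_Ico_succ_top hK₀]
  congr 1
  · apply Finset.sum_congr rfl
    intro k' hk'
    have hk'K : k' < K := (Finset.mem_Ico.1 hk').2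
    rw [hgp k' hk'K]
    congr 1
    apply Finset.sum_congr rfl
    intro i _
    have : sc K K₀ A (hierData (K + 1) N Z' ω) k' i
        = sc K K₀ A (hierData (K + 1) N Z ω) k' i := by
      simp only [sc]
      rw [htr, hgp k' hk'K]
    rw [this]
  · rw [hn K]
    congr 1
    have hnK : (gp K (hierData (K + 1) N Z ω) K).1 = m := by
      simp [gp, hierData, min_self, hω]
    rw [hnK]
    calc ∑ i ∈ Finset.range m,
          (if sc K K₀ A (hierData (K + 1) N Z' ω) K i < x then (1 : ℝ≥0∞) else 0)
        = ∑ i ∈ Finset.range m,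
          (if sc K K₀ A (hierData (K + 1) N Z ω) K (permExt σ i) < x then (1 : ℝ≥0∞) else 0) :=
          Finset.sum_congr rfl fun i _ => by rw [hsc i]
      _ = _ := sum_permExt σ
          (fun i' => if sc K K₀ A (hierData (K + 1) N Z ω) K i' < x then (1 : ℝ≥0∞) else 0)

/-- Pointwise bound: the weighted average over the calibration and test groups of the
within-group "bad" fractions is at most `1 - β`. -/
lemma sum_ff_le (K K₀ : ℕ) (hK₀ : K₀ ≤ K)
    (A : (Fin K₀ → ℕ × (ℕ → 𝒳 × 𝒴)) → 𝒳 × 𝒴 → ℝ) (β : ℝ≥0∞)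
    (d : Fin (K + 1) → ℕ × (ℕ → 𝒳 × 𝒴)) :
    ∑ k ∈ Finset.Ico K₀ (K + 1), ((K - K₀ + 1 : ℕ) : ℝ≥0∞)⁻¹ * ff K K₀ A β k d
      ≤ 1 - β := by
  set w : ℝ≥0∞ := ((K - K₀ + 1 : ℕ) : ℝ≥0∞)⁻¹ with hw
  set μd : Measure EReal := ∑ k ∈ Finset.Ico K₀ (K + 1),
      ∑ i ∈ Finset.range (gp K d k).1,
        (w * (((gp K d k).1 : ℕ) : ℝ≥0∞)⁻¹) • Measure.dirac ((sc K K₀ A d k i : ℝ) : EReal)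
    with hμd
  have happly : ∀ s : Set EReal, μd s = ∑ k ∈ Finset.Ico K₀ (K + 1),
      ∑ i ∈ Finset.range (gp K d k).1,
        (w * (((gp K d k).1 : ℕ) : ℝ≥0∞)⁻¹)
          * s.indicator 1 ((sc K K₀ A d k i : ℝ) : EReal) := by
    intro s
    rw [hμd]
    rw [Measure.finset_sum_apply]
    apply Finset.sum_congr rfl
    intro k _
    rw [Measure.finset_sum_apply]
    apply Finset.sum_congr rfl
    intro i _
    rw [Measure.smul_apply, Measure.dirac_apply, smul_eq_mul]
  have hIio : ∀ x : ℝ, μd (Set.Iio (x : EReal)) = pf K K₀ A d x := by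
    intro x
    rw [happly]
    unfold pf
    apply Finset.sum_congr rfl
    intro k _
    rw [Finset.mul_sum]
    apply Finset.sum_congr rfl
    intro i _
    congr 1
    simp only [Set.indicator_apply, Set.mem_Iio, Pi.one_apply]
    by_cases h : sc K K₀ A d k i < x
    · rw [if_pos (by exact_mod_cast h), if_pos h]
    · rw [if_neg (by exact_mod_cast h), if_neg h]
  have hnle : ∀ n : ℕ, ((n : ℝ≥0∞) * (n : ℝ≥0∞)⁻¹ : ℝ≥0∞) ≤ 1 := by
    intro n
    rcases eq_or_ne (n : ℝ≥0∞) 0 with h | h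
    · rw [h]; simp
    · rw [ENNReal.mul_inv_cancel h (ENNReal.natCast_ne_top n)]
  have huniv : μd Set.univ ≤ 1 := by
    rw [happly]
    calc ∑ k ∈ Finset.Ico K₀ (K + 1), ∑ i ∈ Finset.range (gp K d k).1,
          (w * (((gp K d k).1 : ℕ) : ℝ≥0∞)⁻¹)
            * Set.indicator Set.univ 1 ((sc K K₀ A d k i : ℝ) : EReal)
        = ∑ k ∈ Finset.Ico K₀ (K + 1),
            (((gp K d k).1 : ℕ) : ℝ≥0∞) * (w * (((gp K d k).1 : ℕ) : ℝ≥0∞)⁻¹) := by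
          apply Finset.sum_congr rfl
          intro k _
          simp only [Set.indicator_univ, Pi.one_apply, mul_one]
          rw [Finset.sum_const, Finset.card_range, nsmul_eq_mul]
      _ ≤ ∑ k ∈ Finset.Ico K₀ (K + 1), w := by
          apply Finset.sum_le_sum
          intro k _
          calc ((((gp K d k).1 : ℕ) : ℝ≥0∞)) * (w * (((gp K d k).1 : ℕ) : ℝ≥0∞)⁻¹)
              = w * ((((gp K d k).1 : ℕ) : ℝ≥0∞) * (((gp K d k).1 : ℕ) : ℝ≥0∞)⁻¹) := by
                ring
            _ ≤ w * 1 := mul_le_mul_right (hnle _) w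
            _ = w := mul_one w
      _ = 1 := by
          rw [Finset.sum_const, Nat.card_Ico, nsmul_eq_mul]
          have : (K + 1 - K₀ : ℕ) = (K - K₀ + 1 : ℕ) := by omega
          rw [this, hw]
          exact ENNReal.mul_inv_cancel (Nat.cast_ne_zero.2 (Nat.succ_ne_zero _))
            (ENNReal.natCast_ne_top _)
  have hSset : μd {y : EReal | β ≤ μd (Set.Iio y)}
      = ∑ k ∈ Finset.Ico K₀ (K + 1), w * ff K K₀ A β k d := by
    rw [happly]
    apply Finset.sum_congr rfl
    intro k _
    unfold ff
    rw [← Finset.mul_sum, mul_assoc]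
    congr 2
    apply Finset.sum_congr rfl
    intro i _
    simp only [Set.indicator_apply, Set.mem_setOf_eq, Pi.one_apply, hIio]
  calc ∑ k ∈ Finset.Ico K₀ (K + 1), w * ff K K₀ A β k d
      = μd {y : EReal | β ≤ μd (Set.Iio y)} := hSset.symm
    _ ≤ 1 - β := claim3 β μd huniv

end HCPproof

open HCPproof

/-- **Theorem (Marginal coverage for HCP, lower bound).**
If the groups `Z̃_0, …, Z̃_K` are hierarchically exchangeable, the HCP prediction set at
level `α` is built from training groups `0, …, K₀-1` (used to fit the score via the
algorithm `A`) and calibration groups `K₀, …, K-1`, and the test point is the first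
observation `Z K 0` of group `K`, then `P(Y_test ∈ Ĉ(X_test)) ≥ 1 - α`. -/
theorem hcp_marginal_coverage_lower
    {𝒳 𝒴 Ω : Type*} [MeasurableSpace 𝒳] [MeasurableSpace 𝒴] [MeasurableSpace Ω]
    (P : Measure Ω) [IsProbabilityMeasure P]
    (K K₀ : ℕ) (hK₀ : K₀ ≤ K)
    (N : ℕ → Ω → ℕ) (Z : ℕ → ℕ → Ω → 𝒳 × 𝒴)
    (hN : ∀ k ω, 1 ≤ N k ω)
    (hNmeas : ∀ k, Measurable (N k)) (hZmeas : ∀ k i, Measurable (Z k i))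
    (hexch : HierExch (K + 1) P N Z)
    (α : ℝ) (hα₀ : 0 < α) (hα₁ : α < 1)
    (A : (Fin K₀ → ℕ × (ℕ → 𝒳 × 𝒴)) → 𝒳 × 𝒴 → ℝ)
    (hA : Measurable fun p : (Fin K₀ → ℕ × (ℕ → 𝒳 × 𝒴)) × (𝒳 × 𝒴) => A p.1 p.2) :
    ENNReal.ofReal (1 - α) ≤
      P {ω | (A (hierData K₀ N Z ω) (Z K 0 ω) : EReal)
          ≤ hcpThreshold α K₀ K (fun k => N k ω)
              fun k i => A (hierData K₀ N Z ω) (Z k i ω)} := by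

  classical
  set β : ℝ≥0∞ := ENNReal.ofReal (1 - α) with hβdef
  have hβ1 : β ≤ 1 := by rw [hβdef]; exact ENNReal.ofReal_le_one.2 (by linarith)
  set H : Ω → (Fin (K + 1) → ℕ × (ℕ → 𝒳 × 𝒴)) := hierData (K + 1) N Z with hHdef
  have mH : Measurable H := measurable_pi_lambda _ fun k =>
    (hNmeas k.1).prodMk (measurable_pi_lambda _ fun i => hZmeas k.1 i)
  set Q : Measure (Fin (K + 1) → ℕ × (ℕ → 𝒳 × 𝒴)) := Measure.map H P with hQdef
  haveI : IsProbabilityMeasure Q := Measure.isProbabilityMeasure_map mH.aemeasurable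
  set B : ℕ → Set (Fin (K + 1) → ℕ × (ℕ → 𝒳 × 𝒴)) :=
    fun j => {d | β ≤ pf K K₀ A d (sc K K₀ A d K j)} with hBdef
  have mB : ∀ j, MeasurableSet (B j) := fun j =>
    measurableSet_le measurable_const (meas_pf_sc hA K j)
  set sm : ℕ → Set (Fin (K + 1) → ℕ × (ℕ → 𝒳 × 𝒴)) :=
    fun m => {d | (gp K d K).1 = m} with hsmdef
  have msm : ∀ m, MeasurableSet (sm m) := fun m => (meas_nn K) (measurableSet_singleton m)
  have hsm_pre : ∀ m, H ⁻¹' (sm m) = {ω | N K ω = m} := by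
    intro m
    ext ω
    show (gp K (H ω) K).1 = m ↔ N K ω = m
    simp only [hHdef, gp, hierData, min_self]
  have hgpH : ∀ (ω : Ω) (k : ℕ), k ≤ K → gp K (H ω) k = (N k ω, fun i => Z k i ω) := by
    intro ω k hk
    simp only [hHdef, gp, hierData, min_eq_left hk]
  have htrH : ∀ ω, tr K K₀ (H ω) = hierData K₀ N Z ω := by
    intro ω
    funext j
    show gp K (H ω) j.1 = _
    rw [hgpH ω j.1 (le_trans (le_of_lt j.2) hK₀)]
    rfl
  have hscH : ∀ (ω : Ω) (k i : ℕ), k ≤ K →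
      sc K K₀ A (H ω) k i = A (hierData K₀ N Z ω) (Z k i ω) := by
    intro ω k i hk
    simp only [sc]
    rw [htrH, hgpH ω k hk]
  -- Claim 1 : the good event is contained in the target event
  have hsubset : H ⁻¹' ((B 0)ᶜ) ⊆ {ω | (A (hierData K₀ N Z ω) (Z K 0 ω) : EReal)
      ≤ hcpThreshold α K₀ K (fun k => N k ω)
        fun k i => A (hierData K₀ N Z ω) (Z k i ω)} := by
    intro ω hω
    simp only [Set.mem_preimage, Set.mem_compl_iff, hBdef, Set.mem_setOf_eq, not_le] at hω
    show (A (hierData K₀ N Z ω) (Z K 0 ω) : EReal) ≤ _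
    unfold hcpThreshold erealQuantile
    apply le_sInf
    intro t ht
    simp only [Set.mem_setOf_eq] at ht
    by_contra hcon
    push_neg at hcon
    set s₀ : ℝ := A (hierData K₀ N Z ω) (Z K 0 ω) with hs₀
    have htne : t ≠ ⊤ := ne_top_of_lt (lt_of_lt_of_le hcon le_top)
    rw [Measure.add_apply, Measure.smul_apply, smul_eq_mul, Measure.dirac_apply,
      Set.indicator_of_notMem (by simpa [Set.mem_Iic, top_le_iff] using htne),
      mul_zero, add_zero, Measure.finset_sum_apply] at ht
    have ht2 : β ≤ ∑ k ∈ Finset.Ico K₀ K, ∑ i ∈ Finset.range (N k ω),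
        (((K - K₀ + 1 : ℕ) : ℝ≥0∞) * ((N k ω : ℕ) : ℝ≥0∞))⁻¹
          * (Set.Iic t).indicator 1 ((A (hierData K₀ N Z ω) (Z k i ω) : ℝ) : EReal) := by
      refine le_trans ht (le_of_eq ?_)
      apply Finset.sum_congr rfl
      intro k _
      rw [Measure.finset_sum_apply]
      apply Finset.sum_congr rfl
      intro i _
      rw [Measure.smul_apply, smul_eq_mul, Measure.dirac_apply]
    have hterm : ∀ a : ℝ,
        (Set.Iic t).indicator (1 : EReal → ℝ≥0∞) (a : EReal)
          ≤ (if a < s₀ then (1 : ℝ≥0∞) else 0) := by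
      intro a
      by_cases h : (a : EReal) ∈ Set.Iic t
      · rw [Set.indicator_of_mem h]
        have : a < s₀ := by exact_mod_cast lt_of_le_of_lt h hcon
        rw [if_pos this]
        exact le_rfl
      · rw [Set.indicator_of_notMem h]
        exact zero_le
    have hmid : β ≤ ∑ k ∈ Finset.Ico K₀ K,
        (((K - K₀ + 1 : ℕ) : ℝ≥0∞)⁻¹ * ((N k ω : ℕ) : ℝ≥0∞)⁻¹)
          * ∑ i ∈ Finset.range (N k ω),
            (if A (hierData K₀ N Z ω) (Z k i ω) < s₀ then (1 : ℝ≥0∞) else 0) := by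
      refine le_trans ht2 ?_
      apply Finset.sum_le_sum
      intro k _
      rw [Finset.mul_sum]
      apply Finset.sum_le_sum
      intro i _
      rw [ENNReal.mul_inv (Or.inl (Nat.cast_ne_zero.2 (Nat.succ_ne_zero _)))
        (Or.inl (ENNReal.natCast_ne_top _))]
      exact mul_le_mul_right (hterm _) _
    have hfinal : (∑ k ∈ Finset.Ico K₀ K,
        (((K - K₀ + 1 : ℕ) : ℝ≥0∞)⁻¹ * ((N k ω : ℕ) : ℝ≥0∞)⁻¹)
          * ∑ i ∈ Finset.range (N k ω),
            (if A (hierData K₀ N Z ω) (Z k i ω) < s₀ then (1 : ℝ≥0∞) else 0))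
        ≤ pf K K₀ A (H ω) (sc K K₀ A (H ω) K 0) := by
      unfold pf
      rw [Finset.sum_Ico_succ_top hK₀]
      refine le_trans (le_of_eq ?_) le_self_add
      apply Finset.sum_congr rfl
      intro k hk
      have hkK : k ≤ K := le_of_lt (Finset.mem_Ico.1 hk).2
      rw [hgpH ω k hkK]
      congr 1
      apply Finset.sum_congr rfl
      intro i _
      rw [hscH ω k i hkK, hscH ω K 0 le_rfl]
    exact absurd (le_trans hmid hfinal) (not_le.2 hω)
  -- within-group exchange
  have hBsm : ∀ m : ℕ, ∀ j < m, Q (B j ∩ sm m) = Q (B 0 ∩ sm m) := by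
    intro m j hj
    have hs : MeasurableSet {ω | N K ω = m} := (hNmeas K) (measurableSet_singleton m)
    have hpre : ∀ j', H ⁻¹' (B j' ∩ sm m) = H ⁻¹' (B j') ∩ {ω | N K ω = m} := by
      intro j'
      rw [Set.preimage_inter, hsm_pre]
    rcases eq_or_lt_of_le (zero_le : (0 : ℝ≥0∞) ≤ P {ω | N K ω = m}) with hzero | hpos
    · have hQ0 : ∀ j', Q (B j' ∩ sm m) = 0 := by
        intro j'
        rw [hQdef, Measure.map_apply mH ((mB j').inter (msm m)), hpre j']
        exact le_antisymm (le_trans (measure_mono Set.inter_subset_right) hzero.symm.le)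
          zero_le
      rw [hQ0 j, hQ0 0]
    · set σ : Equiv.Perm (Fin m) :=
        Equiv.swap ⟨0, lt_of_le_of_lt (Nat.zero_le j) hj⟩ ⟨j, hj⟩ with hσ
      have h0m : (0 : ℕ) < m := lt_of_le_of_lt (Nat.zero_le j) hj
      have hperm0 : permExt σ 0 = j := by
        simp only [permExt, dif_pos h0m, hσ]
        rw [Equiv.swap_apply_left]
      have hmap := hexch.2 K (Nat.lt_succ_self K) m hpos σ
      have mH' : Measurable (hierData (K + 1) N
          (fun k' i => if k' = K then Z k' (permExt σ i) else Z k' i)) := by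
        apply measurable_pi_lambda
        intro k
        refine (hNmeas k.1).prodMk (measurable_pi_lambda _ fun i => ?_)
        show Measurable (if (k : ℕ) = K then Z k.1 (permExt σ i) else Z k.1 i)
        split_ifs with h
        · exact hZmeas _ _
        · exact hZmeas _ _
      have h1 := congrArg (fun μ : Measure (Fin (K + 1) → ℕ × (ℕ → 𝒳 × 𝒴)) => μ (B 0)) hmap
      rw [Measure.map_apply mH' (mB 0), Measure.map_apply mH (mB 0),
        cond_apply hs, cond_apply hs] at h1
      have hset : {ω | N K ω = m} ∩ (hierData (K + 1) N
            (fun k' i => if k' = K then Z k' (permExt σ i) else Z k' i)) ⁻¹' (B 0)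
          = {ω | N K ω = m} ∩ H ⁻¹' (B j) := by
        ext ω
        simp only [Set.mem_inter_iff, Set.mem_preimage, Set.mem_setOf_eq, hBdef, hHdef]
        constructor
        · rintro ⟨hm, hb⟩
          refine ⟨hm, ?_⟩
          obtain ⟨hpf', hsc'⟩ := pf_within K K₀ hK₀ A N Z m σ ω hm
          rw [hsc' 0, hperm0, hpf'] at hb
          exact hb
        · rintro ⟨hm, hb⟩
          refine ⟨hm, ?_⟩
          obtain ⟨hpf', hsc'⟩ := pf_within K K₀ hK₀ A N Z m σ ω hm
          rw [hsc' 0, hperm0, hpf']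
          exact hb
      rw [hset] at h1
      have hne0 : (P {ω | N K ω = m})⁻¹ ≠ 0 := ENNReal.inv_ne_zero.2 (measure_ne_top P _)
      have hnetop : (P {ω | N K ω = m})⁻¹ ≠ ⊤ := ENNReal.inv_ne_top.2 hpos.ne'
      have hcancel := (ENNReal.mul_right_inj hne0 hnetop).1 h1
      rw [hQdef, Measure.map_apply mH ((mB j).inter (msm m)),
        Measure.map_apply mH ((mB 0).inter (msm m)), hpre j, hpre 0]
      rw [Set.inter_comm ({ω | N K ω = m}) _] at hcancel
      rw [Set.inter_comm ({ω | N K ω = m}) _] at hcancel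
      exact hcancel
  -- step A : Q (B 0) as an integral
  have hdisj : Pairwise (Function.onFun Disjoint sm) := by
    intro m m' hmm'
    rw [Function.onFun, Set.disjoint_left]
    intro d hd hd'
    exact hmm' ((hd : (gp K d K).1 = m) ▸ (hd' : (gp K d K).1 = m'))
  have hsmuniv : (⋃ m, sm m) = Set.univ := by
    ext d
    simp only [Set.mem_iUnion, Set.mem_univ, iff_true]
    exact ⟨(gp K d K).1, rfl⟩
  have hpart : ∀ m, Q (B 0 ∩ sm m) = ∫⁻ d in sm m, ff K K₀ A β K d ∂Q := by
    intro m
    rcases Nat.eq_zero_or_pos m with h0 | hm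
    · subst h0
      have h00 : Q (sm 0) = 0 := by
        rw [hQdef, Measure.map_apply mH (msm 0), hsm_pre]
        have hempty : {ω | N K ω = 0} = (∅ : Set Ω) := by
          ext ω
          simp only [Set.mem_setOf_eq, Set.mem_empty_iff_false, iff_false]
          intro h
          exact absurd (h ▸ hN K ω) (by omega)
        rw [hempty, measure_empty]
      rw [setLIntegral_measure_zero _ _ h00]
      exact le_antisymm (le_trans (measure_mono Set.inter_subset_right) h00.le) zero_le
    · have hmeasind : ∀ j : ℕ, Measurable fun d : Fin (K + 1) → ℕ × (ℕ → 𝒳 × 𝒴) =>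
          (B j).indicator (fun _ => (1 : ℝ≥0∞)) d :=
        fun j => measurable_const.indicator (mB j)
      have hcong : ∫⁻ d in sm m, ff K K₀ A β K d ∂Q
          = ∫⁻ d in sm m, ((m : ℝ≥0∞))⁻¹
              * ∑ j ∈ Finset.range m, (B j).indicator (fun _ => (1 : ℝ≥0∞)) d ∂Q := by
        apply setLIntegral_congr_fun (msm m)
        intro d hd
        have hdm : (gp K d K).1 = m := hd
        unfold ff
        rw [hdm]
        congr 1
        apply Finset.sum_congr rfl
        intro j _
        rw [Set.indicator_apply]
        by_cases h : β ≤ pf K K₀ A d (sc K K₀ A d K j)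
        · rw [if_pos h, if_pos (show d ∈ B j from h)]
        · rw [if_neg h, if_neg (show d ∉ B j from h)]
      have hint : ∀ j, ∫⁻ d in sm m, (B j).indicator (fun _ => (1 : ℝ≥0∞)) d ∂Q
          = Q (B j ∩ sm m) := by
        intro j
        rw [lintegral_indicator (mB j), setLIntegral_one]
        rw [Measure.restrict_apply (mB j)]
      rw [hcong, lintegral_const_mul _ (Finset.measurable_sum _ fun j _ => hmeasind j),
        lintegral_finset_sum _ fun j _ => hmeasind j]
      have : ∑ j ∈ Finset.range m, ∫⁻ d in sm m, (B j).indicator (fun _ => (1 : ℝ≥0∞)) d ∂Q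
          = (m : ℝ≥0∞) * Q (B 0 ∩ sm m) := by
        calc ∑ j ∈ Finset.range m, ∫⁻ d in sm m, (B j).indicator (fun _ => (1 : ℝ≥0∞)) d ∂Q
            = ∑ _j ∈ Finset.range m, Q (B 0 ∩ sm m) := by
              apply Finset.sum_congr rfl
              intro j hjm
              rw [hint j, hBsm m j (Finset.mem_range.1 hjm)]
          _ = (m : ℝ≥0∞) * Q (B 0 ∩ sm m) := by
              rw [Finset.sum_const, Finset.card_range, nsmul_eq_mul]
      rw [this, ← mul_assoc, ENNReal.inv_mul_cancel (Nat.cast_ne_zero.2 hm.ne')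
        (ENNReal.natCast_ne_top m), one_mul]
  have hQBint : Q (B 0) = ∫⁻ d, ff K K₀ A β K d ∂Q := by
    have hU : (⋃ m, B 0 ∩ sm m) = B 0 := by
      rw [← Set.inter_iUnion, hsmuniv, Set.inter_univ]
    calc Q (B 0) = Q (⋃ m, B 0 ∩ sm m) := by rw [hU]
      _ = ∑' m, Q (B 0 ∩ sm m) := by
          refine measure_iUnion ?_ fun m => (mB 0).inter (msm m)
          intro m m' hmm'
          exact Disjoint.mono Set.inter_subset_right Set.inter_subset_right (hdisj hmm')
      _ = ∑' m, ∫⁻ d in sm m, ff K K₀ A β K d ∂Q := tsum_congr hpart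
      _ = ∫⁻ d in ⋃ m, sm m, ff K K₀ A β K d ∂Q :=
          (lintegral_iUnion msm hdisj _).symm
      _ = ∫⁻ d, ff K K₀ A β K d ∂Q := by rw [hsmuniv, Measure.restrict_univ]
  -- step B : across-group exchange
  have hswap : ∀ k, K₀ ≤ k → k ≤ K →
      ∫⁻ d, ff K K₀ A β K d ∂Q = ∫⁻ d, ff K K₀ A β k d ∂Q := by
    intro k hk0 hkK
    set σf : Equiv.Perm (Fin (K + 1)) :=
      Equiv.swap (⟨k, Nat.lt_succ_of_le hkK⟩ : Fin (K + 1)) ⟨K, Nat.lt_succ_self K⟩ with hσf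
    have hmapg := hexch.1 σf
    have mHσ : Measurable (fun ω => fun j : Fin (K + 1) => hierData (K + 1) N Z ω (σf j)) :=
      measurable_pi_lambda _ fun j =>
        ((hNmeas _).prodMk (measurable_pi_lambda _ fun i => hZmeas _ _))
    calc ∫⁻ d, ff K K₀ A β K d ∂Q
        = ∫⁻ d, ff K K₀ A β K d
            ∂(Measure.map (fun ω => fun j : Fin (K + 1) => hierData (K + 1) N Z ω (σf j)) P) := by
          rw [hmapg, hQdef, hHdef]
      _ = ∫⁻ ω, ff K K₀ A β K (fun j => hierData (K + 1) N Z ω (σf j)) ∂P :=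
          lintegral_map (meas_ff hA β K) mHσ
      _ = ∫⁻ ω, ff K K₀ A β k (hierData (K + 1) N Z ω) ∂P := by
          apply lintegral_congr
          intro ω
          exact ff_swap K K₀ A β k hk0 hkK (hierData (K + 1) N Z ω)
      _ = ∫⁻ d, ff K K₀ A β k d ∂Q := by
          rw [hQdef, hHdef]
          exact (lintegral_map (meas_ff hA β k) mH).symm
  -- step C : conclude the bound on Q (B 0)
  set w : ℝ≥0∞ := ((K - K₀ + 1 : ℕ) : ℝ≥0∞)⁻¹ with hw
  have hQBle : Q (B 0) ≤ 1 - β := by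
    have hsum : ∑ k ∈ Finset.Ico K₀ (K + 1), w * ∫⁻ d, ff K K₀ A β k d ∂Q
        = ∫⁻ d, ff K K₀ A β K d ∂Q := by
      calc ∑ k ∈ Finset.Ico K₀ (K + 1), w * ∫⁻ d, ff K K₀ A β k d ∂Q
          = ∑ _k ∈ Finset.Ico K₀ (K + 1), w * ∫⁻ d, ff K K₀ A β K d ∂Q := by
            apply Finset.sum_congr rfl
            intro k hk
            rw [hswap k (Finset.mem_Ico.1 hk).1 (Nat.lt_succ_iff.1 (Finset.mem_Ico.1 hk).2)]
        _ = ((K - K₀ + 1 : ℕ) : ℝ≥0∞) * (w * ∫⁻ d, ff K K₀ A β K d ∂Q) := by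
            rw [Finset.sum_const, Nat.card_Ico, nsmul_eq_mul]
            congr 2
            omega
        _ = ∫⁻ d, ff K K₀ A β K d ∂Q := by
            rw [← mul_assoc, ENNReal.mul_inv_cancel (Nat.cast_ne_zero.2 (Nat.succ_ne_zero _))
              (ENNReal.natCast_ne_top _), one_mul]
    calc Q (B 0) = ∫⁻ d, ff K K₀ A β K d ∂Q := hQBint
      _ = ∑ k ∈ Finset.Ico K₀ (K + 1), w * ∫⁻ d, ff K K₀ A β k d ∂Q := hsum.symm
      _ = ∫⁻ d, ∑ k ∈ Finset.Ico K₀ (K + 1), w * ff K K₀ A β k d ∂Q := by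
          rw [lintegral_finset_sum _ fun k _ => (meas_ff hA β k).const_mul w]
          apply Finset.sum_congr rfl
          intro k _
          rw [lintegral_const_mul _ (meas_ff hA β k)]
      _ ≤ ∫⁻ _d, (1 - β) ∂Q := lintegral_mono fun d => sum_ff_le K K₀ hK₀ A β d
      _ = 1 - β := by rw [lintegral_const, measure_univ, mul_one]
  have hfin : β ≤ Q ((B 0)ᶜ) := by
    rw [prob_compl_eq_one_sub (mB 0)]
    have hle1 : Q (B 0) + β ≤ 1 := by
      calc Q (B 0) + β ≤ (1 - β) + β := add_le_add hQBle le_rfl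
        _ = 1 := by rw [tsub_add_cancel_of_le hβ1]
    exact ENNReal.le_sub_of_add_le_left (measure_ne_top Q _) hle1
  calc β ≤ Q ((B 0)ᶜ) := hfin
    _ = P (H ⁻¹' ((B 0)ᶜ)) := by rw [hQdef, Measure.map_apply mH (mB 0).compl]
    _ ≤ P {ω | (A (hierData K₀ N Z ω) (Z K 0 ω) : EReal)
          ≤ hcpThreshold α K₀ K (fun k => N k ω)
              fun k i => A (hierData K₀ N Z ω) (Z k i ω)} := measure_mono hsubset
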